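/- Let T_R, T_B be finite nonempty sets in ℝ^d with conv(T_R) ∩ conv(T_B) = ∅, let h be the unique maximum-margin separator of T = T_R ∪ T_B and M = Mar(T) its separation-margin, and let C = {a ∈ T : dist(a, h) = M} be the support set of T, with C_R = C ∩ T_R and C_B = C ∩ T_B. Then C_R and C_B are nonempty, the bichromatic dataset C (with colors C_R, C_B) has the same maximum-margin separator h and the same separation-margin M as T, and the support set of C equals C itself. -/

import Mathlib

open scoped RealInnerProductSpace

/-- The hyperplane `{x : ⟪w, x⟫ = c}`. -/
def hplane (d : ℕ) (w : EuclideanSpace ℝ (Fin d)) (c : ℝ) :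
    Set (EuclideanSpace ℝ (Fin d)) :=
  {x | ⟪w, x⟫ = c}

/-- The margin `M_h(T) = min_{a ∈ T} dist(a, h)` of a hyperplane `h` w.r.t. a set `T`. -/
noncomputable def margin (d : ℕ) (T h : Set (EuclideanSpace ℝ (Fin d))) : ℝ :=
  sInf ((fun a => Metric.infDist a h) '' T)

/-- `(w, c)` strictly separates the red set `VR` from the blue set `VB`. -/
def StrictSep (d : ℕ) (VR VB : Set (EuclideanSpace ℝ (Fin d)))
    (w : EuclideanSpace ℝ (Fin d)) (c : ℝ) : Prop :=
  (∀ r ∈ VR, ⟪w, r⟫ < c) ∧ ∀ b ∈ VB, c < ⟪w, b⟫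

lemma infDist_hplane (d : ℕ) (w : EuclideanSpace ℝ (Fin d)) (c : ℝ) (hw : w ≠ 0)
    (x : EuclideanSpace ℝ (Fin d)) :
    Metric.infDist x (hplane d w c) = |⟪w, x⟫ - c| / ‖w‖ := by
  have hw0 : (0:ℝ) < ‖w‖ := norm_pos_iff.mpr hw
  set y := x - ((⟪w, x⟫ - c) / ‖w‖^2) • w with hy
  have hymem : y ∈ hplane d w c := by
    simp only [hplane, Set.mem_setOf_eq, hy, inner_sub_right, inner_smul_right,
      real_inner_self_eq_norm_sq]
    field_simp
    ring
  have hdist : dist x y = |⟪w, x⟫ - c| / ‖w‖ := by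
    rw [dist_eq_norm]
    have : x - y = ((⟪w, x⟫ - c) / ‖w‖^2) • w := by simp [hy]
    rw [this, norm_smul, Real.norm_eq_abs, abs_div, abs_pow, abs_norm]
    field_simp
  refine le_antisymm (hdist ▸ Metric.infDist_le_dist_of_mem hymem) ?_
  by_contra hlt
  push_neg at hlt
  obtain ⟨z, hz, hdz⟩ := (Metric.infDist_lt_iff ⟨y, hymem⟩).mp hlt
  have hz' : ⟪w, z⟫ = c := hz
  have h1 : |⟪w, x⟫ - c| ≤ ‖w‖ * ‖x - z‖ := by
    have := abs_real_inner_le_norm w (x - z)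
    rwa [inner_sub_right, hz'] at this
  rw [lt_div_iff₀ hw0] at hdz
  rw [dist_eq_norm] at hdz
  nlinarith [h1]

lemma margin_le_dist (d : ℕ) (T h : Set (EuclideanSpace ℝ (Fin d))) (hfin : T.Finite)
    {a} (ha : a ∈ T) : margin d T h ≤ Metric.infDist a h :=
  csInf_le ((hfin.image _).bddBelow) ⟨a, ha, rfl⟩

lemma margin_attained (d : ℕ) (T h : Set (EuclideanSpace ℝ (Fin d))) (hfin : T.Finite)
    (hne : T.Nonempty) : ∃ a ∈ T, margin d T h = Metric.infDist a h := by
  have := (hne.image (fun a => Metric.infDist a h)).csInf_mem (hfin.image _)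
  obtain ⟨a, ha, he⟩ := this
  exact ⟨a, ha, he.symm⟩

lemma lt_margin (d : ℕ) (T h : Set (EuclideanSpace ℝ (Fin d))) (hfin : T.Finite)
    (hne : T.Nonempty) {m : ℝ} (hm : ∀ a ∈ T, m < Metric.infDist a h) : m < margin d T h := by
  obtain ⟨a, ha, he⟩ := margin_attained d T h hfin hne
  rw [he]; exact hm a ha

lemma hplane_neg (d : ℕ) (w : EuclideanSpace ℝ (Fin d)) (c : ℝ) :
    hplane d (-w) (-c) = hplane d w c := by
  ext x; simp [hplane]

/-- If no red point attains the margin, one can shift the plane toward the reds and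
strictly improve the margin; hence some red point attains it. -/
lemma aux_red (d : ℕ) (TR TB : Finset (EuclideanSpace ℝ (Fin d)))
    (hR : TR.Nonempty) (hB : TB.Nonempty)
    (w : EuclideanSpace ℝ (Fin d)) (c M : ℝ) (hw : w ≠ 0)
    (hsep : StrictSep d ↑TR ↑TB w c)
    (hmax : ∀ (w' : EuclideanSpace ℝ (Fin d)) (c' : ℝ), w' ≠ 0 →
      StrictSep d ↑TR ↑TB w' c' →
      margin d (↑TR ∪ ↑TB) (hplane d w' c') ≤ margin d (↑TR ∪ ↑TB) (hplane d w c))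
    (hM : M = margin d (↑TR ∪ ↑TB) (hplane d w c)) :
    ∃ r ∈ TR, Metric.infDist r (hplane d w c) = M := by
  by_contra hcon
  push_neg at hcon
  have hw0 : (0:ℝ) < ‖w‖ := norm_pos_iff.mpr hw
  have hfd := infDist_hplane d w c hw
  have hTfin : ((↑TR ∪ ↑TB : Set (EuclideanSpace ℝ (Fin d)))).Finite :=
    TR.finite_toSet.union TB.finite_toSet
  have hTne : (↑TR ∪ ↑TB : Set (EuclideanSpace ℝ (Fin d))).Nonempty :=
    ⟨hR.choose, Or.inl hR.choose_spec⟩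
  have hMle : ∀ a ∈ (↑TR ∪ ↑TB : Set (EuclideanSpace ℝ (Fin d))),
      M ≤ Metric.infDist a (hplane d w c) := fun a ha => hM ▸ margin_le_dist d _ _ hTfin ha
  have hMpos : 0 < M := by
    obtain ⟨a, ha, he⟩ := margin_attained d (↑TR ∪ ↑TB) (hplane d w c) hTfin hTne
    rw [hM, he, hfd a]
    have hne : ⟪w,a⟫ - c ≠ 0 := by
      rcases ha with h | h
      · exact sub_ne_zero.mpr (ne_of_lt (hsep.1 a h))
      · exact sub_ne_zero.mpr (ne_of_gt (hsep.2 a h))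
    positivity
  have hred : ∀ r ∈ TR, M * ‖w‖ < c - ⟪w, r⟫ := by
    intro r hr
    have h1 := hMle r (Or.inl hr)
    rw [hfd r, le_div_iff₀ hw0] at h1
    have hne := hcon r hr
    rw [hfd r] at hne
    have hlt : ⟪w,r⟫ < c := hsep.1 r hr
    have habs : |⟪w,r⟫ - c| = c - ⟪w,r⟫ := by
      rw [abs_of_neg (by linarith), neg_sub]
    rw [habs] at h1 hne
    rcases lt_or_eq_of_le h1 with h | h
    · exact h
    · exfalso; exact hne (by rw [← h]; field_simp)
  have hblue : ∀ b ∈ TB, M * ‖w‖ ≤ ⟪w, b⟫ - c := by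
    intro b hb
    have h1 := hMle b (Or.inr hb)
    rw [hfd b, le_div_iff₀ hw0] at h1
    have hlt : c < ⟪w,b⟫ := hsep.2 b hb
    rwa [abs_of_pos (by linarith)] at h1
  -- minimum red signed distance
  set mR : ℝ := (TR.image (fun r => c - ⟪w, r⟫)).min' (hR.image _) with hmR
  have hmRle : ∀ r ∈ TR, mR ≤ c - ⟪w, r⟫ := fun r hr =>
    Finset.min'_le _ _ (Finset.mem_image_of_mem _ hr)
  have hmRgt : M * ‖w‖ < mR := by
    have hmem := Finset.min'_mem (TR.image (fun r => c - ⟪w, r⟫)) (hR.image _)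
    rw [Finset.mem_image] at hmem
    obtain ⟨r, hr, he⟩ := hmem
    rw [hmR, ← he]
    exact hred r hr
  set ε : ℝ := (mR - M * ‖w‖) / 2 with hε
  have hεpos : 0 < ε := by rw [hε]; linarith
  have hsep' : StrictSep d ↑TR ↑TB w (c - ε) := by
    constructor
    · intro r hr
      have := hmRle r hr
      have hMw : 0 < M * ‖w‖ := mul_pos hMpos hw0
      rw [hε] at *
      linarith
    · intro b hb
      have := hsep.2 b hb
      linarith
  have hmargin' : M < margin d (↑TR ∪ ↑TB) (hplane d w (c - ε)) := by
    apply lt_margin d _ _ hTfin hTne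
    intro a ha
    rw [infDist_hplane d w (c - ε) hw a, lt_div_iff₀ hw0]
    rcases ha with h | h
    · have h1 := hmRle a h
      have h2 : ⟪w, a⟫ - (c - ε) < 0 := by
        have := hsep'.1 a h; linarith
      rw [abs_of_neg h2]
      rw [hε] at *
      linarith
    · have h1 := hblue a h
      have h2 : 0 < ⟪w, a⟫ - (c - ε) := by
        have := hsep'.2 a h; linarith
      rw [abs_of_pos h2]
      linarith
  have := hmax w (c - ε) hw hsep'
  rw [← hM] at this
  linarith

/-- Let `h` be the maximum-margin separator of `T = T_R ∪ T_B`,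
`M = Mar(T)`, and let `C = {a ∈ T : dist(a, h) = M}` be the support set, with colors
`C_R = C ∩ T_R` and `C_B = C ∩ T_B`.  Then `C_R, C_B` are nonempty, the dataset `C` has
the same maximum-margin separator `h` and separation-margin `M` as `T`, and the support
set of `C` is `C` itself. -/
theorem stmt_10 (d : ℕ) (TR TB : Finset (EuclideanSpace ℝ (Fin d)))
    (hR : TR.Nonempty) (hB : TB.Nonempty)
    (hdisj : convexHull ℝ (TR : Set (EuclideanSpace ℝ (Fin d))) ∩
      convexHull ℝ (TB : Set (EuclideanSpace ℝ (Fin d))) = ∅)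
    (w : EuclideanSpace ℝ (Fin d)) (c M : ℝ) (hw : w ≠ 0)
    (hsep : StrictSep d ↑TR ↑TB w c)
    -- `hplane d w c` is the maximum-margin separator of `T` …
    (hmax : ∀ (w' : EuclideanSpace ℝ (Fin d)) (c' : ℝ), w' ≠ 0 →
      StrictSep d ↑TR ↑TB w' c' →
      margin d (↑TR ∪ ↑TB) (hplane d w' c') ≤ margin d (↑TR ∪ ↑TB) (hplane d w c))
    -- … and it is the unique one attaining the maximum margin
    (huniq : ∀ (w' : EuclideanSpace ℝ (Fin d)) (c' : ℝ), w' ≠ 0 →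
      StrictSep d ↑TR ↑TB w' c' →
      margin d (↑TR ∪ ↑TB) (hplane d w' c') = margin d (↑TR ∪ ↑TB) (hplane d w c) →
      hplane d w' c' = hplane d w c)
    (hM : M = margin d (↑TR ∪ ↑TB) (hplane d w c))
    -- the support set of `T` and its two color classes
    (C CR CB : Set (EuclideanSpace ℝ (Fin d)))
    (hC : C = {a ∈ (↑TR ∪ ↑TB : Set (EuclideanSpace ℝ (Fin d))) |
      Metric.infDist a (hplane d w c) = M})
    (hCR : CR = C ∩ ↑TR) (hCB : CB = C ∩ ↑TB) :
    CR.Nonempty ∧ CB.Nonempty ∧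
    -- `h` strictly separates `C` and realizes the same margin `M` on `C` …
    StrictSep d CR CB w c ∧
    margin d C (hplane d w c) = M ∧
    -- … it is the maximum-margin separator of `C`, with `Mar(C) = M` …
    (∀ (w' : EuclideanSpace ℝ (Fin d)) (c' : ℝ), w' ≠ 0 → StrictSep d CR CB w' c' →
      margin d C (hplane d w' c') ≤ M) ∧
    -- … and the support set of `C` equals `C`.
    {a ∈ C | Metric.infDist a (hplane d w c) = M} = C := by
  have hw0 : (0:ℝ) < ‖w‖ := norm_pos_iff.mpr hw
  have hfd := infDist_hplane d w c hw
  have hTfin : ((↑TR ∪ ↑TB : Set (EuclideanSpace ℝ (Fin d)))).Finite :=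
    TR.finite_toSet.union TB.finite_toSet
  have hTne : (↑TR ∪ ↑TB : Set (EuclideanSpace ℝ (Fin d))).Nonempty :=
    ⟨hR.choose, Or.inl hR.choose_spec⟩
  have hMle : ∀ a ∈ (↑TR ∪ ↑TB : Set (EuclideanSpace ℝ (Fin d))),
      M ≤ Metric.infDist a (hplane d w c) := fun a ha => hM ▸ margin_le_dist d _ _ hTfin ha
  have hMpos : 0 < M := by
    obtain ⟨a, ha, he⟩ := margin_attained d (↑TR ∪ ↑TB) (hplane d w c) hTfin hTne
    rw [hM, he, hfd a]
    have hne : ⟪w,a⟫ - c ≠ 0 := by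
      rcases ha with h | h
      · exact sub_ne_zero.mpr (ne_of_lt (hsep.1 a h))
      · exact sub_ne_zero.mpr (ne_of_gt (hsep.2 a h))
    positivity
  have habsle : ∀ a ∈ (↑TR ∪ ↑TB : Set (EuclideanSpace ℝ (Fin d))),
      M * ‖w‖ ≤ |⟪w,a⟫ - c| := by
    intro a ha
    have := hMle a ha
    rw [hfd a, le_div_iff₀ hw0] at this
    linarith
  have hCmem : ∀ a, a ∈ C ↔ (a ∈ (↑TR ∪ ↑TB : Set (EuclideanSpace ℝ (Fin d))) ∧
      |⟪w,a⟫ - c| = M * ‖w‖) := by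
    intro a
    rw [hC]
    simp only [Set.mem_setOf_eq, Set.mem_sep_iff]
    rw [hfd a, div_eq_iff hw0.ne']
  -- CR nonempty
  obtain ⟨r0, hr0R, hr0d⟩ := aux_red d TR TB hR hB w c M hw hsep hmax hM
  have hr0C : r0 ∈ C := by rw [hC]; exact ⟨Or.inl hr0R, hr0d⟩
  have hCRne : CR.Nonempty := ⟨r0, by rw [hCR]; exact ⟨hr0C, hr0R⟩⟩
  -- CB nonempty, by symmetry
  have hsepflip : StrictSep d ↑TB ↑TR (-w) (-c) := by
    constructor
    · intro b hb; rw [inner_neg_left]; have := hsep.2 b hb; linarith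
    · intro r hr; rw [inner_neg_left]; have := hsep.1 r hr; linarith
  have hmaxflip : ∀ (w' : EuclideanSpace ℝ (Fin d)) (c' : ℝ), w' ≠ 0 →
      StrictSep d ↑TB ↑TR w' c' →
      margin d (↑TB ∪ ↑TR) (hplane d w' c') ≤ margin d (↑TB ∪ ↑TR) (hplane d (-w) (-c)) := by
    intro w' c' hw' hs'
    have hs'' : StrictSep d ↑TR ↑TB (-w') (-c') := by
      constructor
      · intro r hr; rw [inner_neg_left]; have := hs'.2 r hr; linarith
      · intro b hb; rw [inner_neg_left]; have := hs'.1 b hb; linarith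
    have := hmax (-w') (-c') (neg_ne_zero.mpr hw') hs''
    rw [hplane_neg] at this
    rw [Set.union_comm, hplane_neg]
    exact this
  have hMflip : M = margin d (↑TB ∪ ↑TR) (hplane d (-w) (-c)) := by
    rw [hplane_neg, Set.union_comm]; exact hM
  obtain ⟨b0, hb0B, hb0d⟩ := aux_red d TB TR hB hR (-w) (-c) M (neg_ne_zero.mpr hw)
    hsepflip hmaxflip hMflip
  rw [hplane_neg] at hb0d
  have hb0C : b0 ∈ C := by rw [hC]; exact ⟨Or.inr hb0B, hb0d⟩
  have hCBne : CB.Nonempty := ⟨b0, by rw [hCB]; exact ⟨hb0C, hb0B⟩⟩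
  -- basic facts about C
  have hCsub : C ⊆ (↑TR ∪ ↑TB : Set (EuclideanSpace ℝ (Fin d))) := by
    rw [hC]; exact Set.sep_subset _ _
  have hCfin : C.Finite := hTfin.subset hCsub
  have hCne : C.Nonempty := ⟨r0, hr0C⟩
  have hCd : ∀ a ∈ C, Metric.infDist a (hplane d w c) = M := by
    intro a ha; rw [hC] at ha; exact ha.2
  have hsepC : StrictSep d CR CB w c := by
    constructor
    · intro a ha; rw [hCR] at ha; exact hsep.1 a ha.2
    · intro a ha; rw [hCB] at ha; exact hsep.2 a ha.2
  have hmarginC : margin d C (hplane d w c) = M := by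
    unfold margin
    have himg : (fun a => Metric.infDist a (hplane d w c)) '' C = {M} := by
      apply Set.Subset.antisymm
      · rintro y ⟨a, ha, rfl⟩
        exact hCd a ha
      · intro y hy
        rw [Set.mem_singleton_iff] at hy
        subst hy
        exact ⟨r0, hr0C, hCd r0 hr0C⟩
    rw [himg, csInf_singleton]
  refine ⟨hCRne, hCBne, hsepC, hmarginC, ?_, ?_⟩
  · -- maximality over separators of C
    intro w' c' hw' hsep'
    classical
    by_contra hgt
    push_neg at hgt
    have hw'0 : (0:ℝ) < ‖w'‖ := norm_pos_iff.mpr hw'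
    have hg : ∀ a ∈ C, M * ‖w'‖ < |⟪w', a⟫ - c'| := by
      intro a ha
      have h1 : M < Metric.infDist a (hplane d w' c') :=
        lt_of_lt_of_le hgt (margin_le_dist d C _ hCfin ha)
      rw [infDist_hplane d w' c' hw' a, lt_div_iff₀ hw'0] at h1
      linarith
    -- interpolation parameter
    set tf : EuclideanSpace ℝ (Fin d) → ℝ := fun a =>
      if |⟪w,a⟫ - c| = M * ‖w‖ then (1:ℝ)/2 else
        (|⟪w,a⟫ - c| - M * ‖w‖) /
          ((|⟪w,a⟫ - c| - M * ‖w‖) + (|⟪w',a⟫ - c'| + M * ‖w'‖) + 1) with htf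
    have hTfne : (TR ∪ TB).Nonempty := ⟨hR.choose, Finset.mem_union_left _ hR.choose_spec⟩
    set t : ℝ := ((TR ∪ TB).image tf).min' (hTfne.image tf) with ht
    have hmemT : ∀ a ∈ TR ∪ TB, a ∈ (↑TR ∪ ↑TB : Set (EuclideanSpace ℝ (Fin d))) := by
      intro a ha
      rw [Finset.mem_union] at ha
      rcases ha with h | h
      · exact Or.inl h
      · exact Or.inr h
    have hBpos : ∀ a : EuclideanSpace ℝ (Fin d), 0 < |⟪w',a⟫ - c'| + M * ‖w'‖ :=
      fun a => add_pos_of_nonneg_of_pos (abs_nonneg _) (mul_pos hMpos hw'0)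
    have htfpos : ∀ a ∈ TR ∪ TB, 0 < tf a := by
      intro a ha
      by_cases h : |⟪w,a⟫ - c| = M * ‖w‖
      · rw [htf]; simp only [if_pos h]; norm_num
      · have hA0 : 0 < |⟪w,a⟫ - c| - M * ‖w‖ := by
          have := habsle a (hmemT a ha)
          rcases lt_or_eq_of_le this with h' | h'
          · linarith
          · exact absurd h'.symm h
        rw [htf]; simp only [if_neg h]
        exact div_pos hA0 (by have := hBpos a; linarith)
    have htfle1 : ∀ a ∈ TR ∪ TB, tf a < 1 := by
      intro a ha
      by_cases h : |⟪w,a⟫ - c| = M * ‖w‖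
      · rw [htf]; simp only [if_pos h]; norm_num
      · rw [htf]; simp only [if_neg h]
        have hB := hBpos a
        have hA0 : 0 < |⟪w,a⟫ - c| - M * ‖w‖ := by
          have := habsle a (hmemT a ha)
          rcases lt_or_eq_of_le this with h' | h'
          · linarith
          · exact absurd h'.symm h
        rw [div_lt_one (by linarith)]
        linarith
    have htpos : 0 < t := by
      rw [ht, Finset.lt_min'_iff]
      intro y hy
      rw [Finset.mem_image] at hy
      obtain ⟨a, ha, rfl⟩ := hy
      exact htfpos a ha
    have htle : ∀ a ∈ TR ∪ TB, t ≤ tf a := fun a ha =>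
      Finset.min'_le _ _ (Finset.mem_image_of_mem tf ha)
    have htlt1 : t < 1 := lt_of_le_of_lt (htle _ (Finset.mem_union_left _ hR.choose_spec))
      (htfle1 _ (Finset.mem_union_left _ hR.choose_spec))
    have htkey : ∀ a ∈ TR ∪ TB, ¬ (|⟪w,a⟫ - c| = M * ‖w‖) →
        t * ((|⟪w,a⟫ - c| - M * ‖w‖) + (|⟪w',a⟫ - c'| + M * ‖w'‖) + 1)
          ≤ |⟪w,a⟫ - c| - M * ‖w‖ := by
      intro a ha h
      have h1 := htle a ha
      rw [htf] at h1; simp only [if_neg h] at h1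
      have hA0 : 0 < |⟪w,a⟫ - c| - M * ‖w‖ := by
        have := habsle a (hmemT a ha)
        rcases lt_or_eq_of_le this with h' | h'
        · linarith
        · exact absurd h'.symm h
      have hd : 0 < (|⟪w,a⟫ - c| - M * ‖w‖) + (|⟪w',a⟫ - c'| + M * ‖w'‖) + 1 := by
        have := hBpos a; linarith
      calc t * ((|⟪w,a⟫ - c| - M * ‖w‖) + (|⟪w',a⟫ - c'| + M * ‖w'‖) + 1)
          ≤ ((|⟪w,a⟫ - c| - M * ‖w‖) /
              ((|⟪w,a⟫ - c| - M * ‖w‖) + (|⟪w',a⟫ - c'| + M * ‖w'‖) + 1)) *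
            ((|⟪w,a⟫ - c| - M * ‖w‖) + (|⟪w',a⟫ - c'| + M * ‖w'‖) + 1) :=
            mul_le_mul_of_nonneg_right h1 hd.le
        _ = |⟪w,a⟫ - c| - M * ‖w‖ := div_mul_cancel₀ _ hd.ne'
    set Wt : ℝ := (1 - t) * ‖w‖ + t * ‖w'‖ with hWtd
    have hWt : 0 < Wt := by
      rw [hWtd]
      have := mul_pos (by linarith : (0:ℝ) < 1 - t) hw0
      have := mul_pos htpos hw'0
      linarith
    set wt : EuclideanSpace ℝ (Fin d) := (1 - t) • w + t • w' with hwt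
    set ct : ℝ := (1 - t) * c + t * c' with hct
    have hinner : ∀ a : EuclideanSpace ℝ (Fin d),
        ⟪wt, a⟫ - ct = (1 - t) * (⟪w,a⟫ - c) + t * (⟪w',a⟫ - c') := by
      intro a
      rw [hwt, hct, inner_add_left, real_inner_smul_left, real_inner_smul_left]
      ring
    have hkey_red : ∀ a ∈ TR,
        (1 - t) * (⟪w,a⟫ - c) + t * (⟪w',a⟫ - c') < -(M * Wt) := by
      intro a ha
      have haT : a ∈ (↑TR ∪ ↑TB : Set (EuclideanSpace ℝ (Fin d))) := Or.inl ha
      have hfneg : ⟪w,a⟫ - c < 0 := sub_neg.mpr (hsep.1 a ha)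
      have habs : |⟪w,a⟫ - c| = -(⟪w,a⟫ - c) := abs_of_neg hfneg
      by_cases h : |⟪w,a⟫ - c| = M * ‖w‖
      · have hfa : ⟪w,a⟫ - c = -(M * ‖w‖) := by rw [← h, habs, neg_neg]
        have haC : a ∈ C := (hCmem a).mpr ⟨haT, h⟩
        have hgneg : ⟪w',a⟫ - c' < 0 := sub_neg.mpr (hsep'.1 a (by rw [hCR]; exact ⟨haC, ha⟩))
        have hgabs := hg a haC
        rw [abs_of_neg hgneg] at hgabs
        have h2 : t * (⟪w',a⟫ - c') < t * (-(M * ‖w'‖)) := by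
          apply mul_lt_mul_of_pos_left _ htpos
          linarith
        rw [hfa, hWtd]
        nlinarith [h2]
      · have h1 := htkey a (Finset.mem_union_left _ ha) h
        have h2 : t * (⟪w',a⟫ - c') ≤ t * |⟪w',a⟫ - c'| :=
          mul_le_mul_of_nonneg_left (le_abs_self _) htpos.le
        rw [hWtd]
        nlinarith [h1, h2, habs, htpos]
    have hkey_blue : ∀ a ∈ TB,
        M * Wt < (1 - t) * (⟪w,a⟫ - c) + t * (⟪w',a⟫ - c') := by
      intro a ha
      have haT : a ∈ (↑TR ∪ ↑TB : Set (EuclideanSpace ℝ (Fin d))) := Or.inr ha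
      have hfpos : 0 < ⟪w,a⟫ - c := sub_pos.mpr (hsep.2 a ha)
      have habs : |⟪w,a⟫ - c| = ⟪w,a⟫ - c := abs_of_pos hfpos
      by_cases h : |⟪w,a⟫ - c| = M * ‖w‖
      · have hfa : ⟪w,a⟫ - c = M * ‖w‖ := by rw [← h, habs]
        have haC : a ∈ C := (hCmem a).mpr ⟨haT, h⟩
        have hgpos : 0 < ⟪w',a⟫ - c' := sub_pos.mpr (hsep'.2 a (by rw [hCB]; exact ⟨haC, ha⟩))
        have hgabs := hg a haC
        rw [abs_of_pos hgpos] at hgabs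
        have h2 : t * (M * ‖w'‖) < t * (⟪w',a⟫ - c') :=
          mul_lt_mul_of_pos_left hgabs htpos
        rw [hfa, hWtd]
        nlinarith [h2]
      · have h1 := htkey a (Finset.mem_union_right _ ha) h
        have h2 : t * (-(⟪w',a⟫ - c')) ≤ t * |⟪w',a⟫ - c'| :=
          mul_le_mul_of_nonneg_left (neg_le_abs _) htpos.le
        rw [hWtd]
        nlinarith [h1, h2, habs, htpos]
    have hwtne : wt ≠ 0 := by
      intro h0
      obtain ⟨r, hr⟩ := hR
      obtain ⟨b, hb⟩ := hB
      have h1 := hkey_red r hr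
      have h2 := hkey_blue b hb
      have e1 := hinner r
      have e2 := hinner b
      rw [h0, inner_zero_left] at e1 e2
      have hMW : 0 < M * Wt := mul_pos hMpos hWt
      linarith
    have hsept : StrictSep d ↑TR ↑TB wt ct := by
      constructor
      · intro a ha
        have h1 := hkey_red a ha
        have he := hinner a
        have hMW : 0 < M * Wt := mul_pos hMpos hWt
        linarith
      · intro a ha
        have h1 := hkey_blue a ha
        have he := hinner a
        have hMW : 0 < M * Wt := mul_pos hMpos hWt
        linarith
    have hnormle : ‖wt‖ ≤ Wt := by
      rw [hwt, hWtd]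
      calc ‖(1 - t) • w + t • w'‖ ≤ ‖(1 - t) • w‖ + ‖t • w'‖ := norm_add_le _ _
        _ = (1 - t) * ‖w‖ + t * ‖w'‖ := by
            rw [norm_smul, norm_smul, Real.norm_eq_abs, Real.norm_eq_abs,
              abs_of_nonneg (by linarith), abs_of_nonneg htpos.le]
    have hmt : M < margin d (↑TR ∪ ↑TB) (hplane d wt ct) := by
      apply lt_margin d _ _ hTfin hTne
      intro a ha
      rw [infDist_hplane d wt ct hwtne a, lt_div_iff₀ (norm_pos_iff.mpr hwtne)]
      have he := hinner a
      have hMW : 0 < M * Wt := mul_pos hMpos hWt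
      have hb : M * Wt < |⟪wt, a⟫ - ct| := by
        rcases ha with h | h
        · have h1 := hkey_red a h
          rw [abs_of_neg (by linarith)]
          linarith
        · have h1 := hkey_blue a h
          rw [abs_of_pos (by linarith)]
          linarith
      have hn : M * ‖wt‖ ≤ M * Wt := mul_le_mul_of_nonneg_left hnormle hMpos.le
      linarith
    have := hmax wt ct hwtne hsept
    rw [← hM] at this
    linarith
  · -- support set of C is C
    rw [Set.sep_eq_self_iff_mem_true]
    exact hCd
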